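/- In a conical regular configuration, every pairwise intersection point γ_{i,j}^{a,b} of boundary hyperplanes (with (i,a) ≠ (j,b), excluding γ_{1,n}^{1,1}) lies on some lower hyperplane: there exists k with dₖα + wₖβ = f'ₖ(0) at γ = γ_{i,j}^{a,b}. -/
import Mathlib


open Finset

private lemma uniq_pt (di wi dj wj c c' : ℝ) (hdet : di * wj - dj * wi ≠ 0)
    (p q : ℝ × ℝ)
    (h1 : di * p.1 + wi * p.2 = c) (h2 : dj * p.1 + wj * p.2 = c')
    (h3 : di * q.1 + wi * q.2 = c) (h4 : dj * q.1 + wj * q.2 = c') : p = q := by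
  have e1 : (di * wj - dj * wi) * (p.1 - q.1) = 0 := by
    linear_combination wj * h1 - wi * h2 - wj * h3 + wi * h4
  have e2 : (di * wj - dj * wi) * (p.2 - q.2) = 0 := by
    linear_combination di * h2 - dj * h1 - di * h4 + dj * h3
  have hx : p.1 = q.1 := by
    rcases mul_eq_zero.1 e1 with h | h
    · exact absurd h hdet
    · linarith
  have hy : p.2 = q.2 := by
    rcases mul_eq_zero.1 e2 with h | h
    · exact absurd h hdet
    · linarith
  exact Prod.ext hx hy

theorem conical_regular_intersections_on_lower_hyperplanes
    (n : ℕ) (hn : 3 ≤ n) (d w : Fin n → ℝ)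
    (hd : ∀ i, d i ≠ 0) (hw : ∀ i, 0 < w i)
    (f : Fin n → ℝ → ℝ)
    (hdiff : ∀ i, Differentiable ℝ (f i))
    (hdiff2 : ∀ i, Differentiable ℝ (deriv (f i)))
    (hpos : ∀ i, ∀ x ∈ Set.Ioo (0:ℝ) 1, 0 < deriv (deriv (f i)) x)
    (g0 g1 : Fin n → ℝ)
    (hg0 : ∀ i, g0 i = deriv (f i) 0) (hg1 : ∀ i, g1 i = deriv (f i) 1)
    (hgne : ∀ i, g0 i ≠ g1 i)
    -- slopes ordered: 1/m₁ > 1/m₂ > ⋯ > 1/mₙ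
    (hord : ∀ i j : Fin n, i < j → d i / w i > d j / w j)
    -- conical regular configuration
    (hreg1 : ∀ (i : ℕ) (hi2 : 2 ≤ i) (hi : i < n),
      ∃! γ : ℝ × ℝ,
        d ⟨i, hi⟩ * γ.1 + w ⟨i, hi⟩ * γ.2 = g0 ⟨i, hi⟩ ∧
        d ⟨i - 1, by omega⟩ * γ.1 + w ⟨i - 1, by omega⟩ * γ.2 = g1 ⟨i - 1, by omega⟩ ∧
        d ⟨0, by omega⟩ * γ.1 + w ⟨0, by omega⟩ * γ.2 = g1 ⟨0, by omega⟩)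
    (hreg2 : ∀ (i : ℕ) (hi2 : 2 ≤ i) (hi : i < n),
      ∃! γ : ℝ × ℝ,
        d ⟨i, hi⟩ * γ.1 + w ⟨i, hi⟩ * γ.2 = g1 ⟨i, hi⟩ ∧
        d ⟨i - 1, by omega⟩ * γ.1 + w ⟨i - 1, by omega⟩ * γ.2 = g1 ⟨i - 1, by omega⟩ ∧
        d ⟨0, by omega⟩ * γ.1 + w ⟨0, by omega⟩ * γ.2 = g0 ⟨0, by omega⟩) :
    ∀ (i j : Fin n) (a b : Bool) (γ : ℝ × ℝ), i ≠ j →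
      d i * γ.1 + w i * γ.2 = (if a then g1 i else g0 i) →
      d j * γ.1 + w j * γ.2 = (if b then g1 j else g0 j) →
      ¬(a = true ∧ b = true ∧
        ((i.val = 0 ∧ j.val = n - 1) ∨ (i.val = n - 1 ∧ j.val = 0))) →
      ∃ k : Fin n, d k * γ.1 + w k * γ.2 = g0 k := by
  have hdet : ∀ i j : Fin n, i ≠ j → d i * w j - d j * w i ≠ 0 := by
    intro i j hij
    rcases lt_or_gt_of_ne hij with h | h
    · have h1 := hord i j h
      have h2 := (div_lt_div_iff₀ (hw j) (hw i)).1 h1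
      intro hc; nlinarith
    · have h1 := hord j i h
      have h2 := (div_lt_div_iff₀ (hw i) (hw j)).1 h1
      intro hc; nlinarith
  intro i j a b γ hij h1 h2 hnot
  cases a with
  | false => exact ⟨i, by simpa using h1⟩
  | true =>
  cases b with
  | false => exact ⟨j, by simpa using h2⟩
  | true =>
  simp only [if_pos rfl] at h1 h2
  by_cases hi0 : i.val = 0
  · -- i is the first line; j is not the last
    have hj0 : j.val ≠ 0 := fun h => hij (Fin.ext (by omega))
    have hjn : j.val ≠ n - 1 := fun h => hnot ⟨rfl, rfl, Or.inl ⟨hi0, h⟩⟩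
    have hm2 : 2 ≤ j.val + 1 := by omega
    have hm : j.val + 1 < n := by have := j.isLt; omega
    obtain ⟨q, ⟨hq1, hq2, hq3⟩, -⟩ := hreg1 (j.val + 1) hm2 hm
    have hq2' : d j * q.1 + w j * q.2 = g1 j := hq2
    have hieq : i = ⟨0, by omega⟩ := Fin.ext hi0
    rw [hieq] at h1
    have hne : (⟨0, by omega⟩ : Fin n) ≠ j := fun h => hj0 (by rw [← h])
    have hγq : γ = q :=
      uniq_pt _ _ _ _ _ _ (hdet _ _ hne) γ q h1 h2 hq3 hq2'
    exact ⟨⟨j.val + 1, hm⟩, by rw [hγq]; exact hq1⟩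
  · by_cases hj0 : j.val = 0
    · have hin : i.val ≠ n - 1 := fun h => hnot ⟨rfl, rfl, Or.inr ⟨h, hj0⟩⟩
      have hm2 : 2 ≤ i.val + 1 := by omega
      have hm : i.val + 1 < n := by have := i.isLt; omega
      obtain ⟨q, ⟨hq1, hq2, hq3⟩, -⟩ := hreg1 (i.val + 1) hm2 hm
      have hq2' : d i * q.1 + w i * q.2 = g1 i := hq2
      have hjeq : j = ⟨0, by omega⟩ := Fin.ext hj0
      rw [hjeq] at h2
      have hne : (⟨0, by omega⟩ : Fin n) ≠ i := fun h => hi0 (by rw [← h])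
      have hγq : γ = q :=
        uniq_pt _ _ _ _ _ _ (hdet _ _ hne) γ q h2 h1 hq3 hq2'
      exact ⟨⟨i.val + 1, hm⟩, by rw [hγq]; exact hq1⟩
    · -- both i and j are "inner" upper lines; all pass through a common point p on g0_0
      obtain ⟨p, ⟨hp1, hp2, hp3⟩, -⟩ := hreg2 2 le_rfl (by omega)
      have claim : ∀ m (hm : m < n), 1 ≤ m →
          d ⟨m, hm⟩ * p.1 + w ⟨m, hm⟩ * p.2 = g1 ⟨m, hm⟩ := by
        intro m
        induction m with
        | zero => intro _ h; omega
        | succ k ih =>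
          intro hm _
          match k, ih with
          | 0, _ => exact hp2
          | 1, _ => exact hp1
          | (l+2), ih =>
            obtain ⟨q, ⟨hq1, hq2, hq3⟩, -⟩ := hreg2 (l + 3) (by omega) hm
            have hkn : l + 2 < n := by omega
            have hprev : d ⟨l+2, hkn⟩ * p.1 + w ⟨l+2, hkn⟩ * p.2 = g1 ⟨l+2, hkn⟩ :=
              ih hkn (by omega)
            have hq2' : d ⟨l+2, hkn⟩ * q.1 + w ⟨l+2, hkn⟩ * q.2 = g1 ⟨l+2, hkn⟩ := hq2
            have hq3' : d ⟨0, by omega⟩ * q.1 + w ⟨0, by omega⟩ * q.2 = g0 ⟨0, by omega⟩ := hq3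
            have hne : (⟨l+2, hkn⟩ : Fin n) ≠ ⟨0, by omega⟩ := by
              intro h; exact absurd (congrArg Fin.val h) (by simp)
            have hpq : p = q :=
              uniq_pt _ _ _ _ _ _ (hdet _ _ hne) p q hprev hp3 hq2' hq3'
            rw [hpq]; exact hq1
      have hpi : d i * p.1 + w i * p.2 = g1 i := by
        have := claim i.val i.isLt (by omega)
        simpa using this
      have hpj : d j * p.1 + w j * p.2 = g1 j := by
        have := claim j.val j.isLt (by omega)
        simpa using this
      have hγp : γ = p :=
        uniq_pt _ _ _ _ _ _ (hdet _ _ hij) γ p h1 h2 hpi hpj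
      exact ⟨⟨0, by omega⟩, by rw [hγp]; exact hp3⟩
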